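/- arXiv:2106.04769 — 6 statements merged into one kernel-verified Lean document; each statement's English description precedes it below -/
import Mathlib

section
/- Let G : [0,1]^n → ℝ be continuously differentiable with ∇G antitone (for a ≤ b, ∇G(a) ≥ ∇G(b) coordinate-wise) and G monotone (∇G ≥ 0). Then for every y, o ∈ [0,1]^n, ⟨o ∨ y − y, ∇G(y)⟩ ≥ G(o ∨ y) − G(y), where ∨ denotes coordinate-wise maximum. -/
open scoped RealInnerProductSpace

theorem monotone_dr_submodular_inner_sup_ge (n : ℕ) (G : EuclideanSpace ℝ (Fin n) → ℝ)
    (hG : ContDiff ℝ 1 G)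
    (hAnti : ∀ a b : EuclideanSpace ℝ (Fin n),
      (∀ i, 0 ≤ a i ∧ a i ≤ 1) → (∀ i, 0 ≤ b i ∧ b i ≤ 1) → (∀ i, a i ≤ b i) →
      ∀ i, gradient G b i ≤ gradient G a i)
    (hMono : ∀ a : EuclideanSpace ℝ (Fin n), (∀ i, 0 ≤ a i ∧ a i ≤ 1) →
      ∀ i, 0 ≤ gradient G a i)
    (y o : EuclideanSpace ℝ (Fin n))
    (hy : ∀ i, 0 ≤ y i ∧ y i ≤ 1) (ho : ∀ i, 0 ≤ o i ∧ o i ≤ 1) :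
    ⟪(show EuclideanSpace ℝ (Fin n) from WithLp.toLp 2 (fun i => max (o i) (y i))) - y, gradient G y⟫ ≥
      G (show EuclideanSpace ℝ (Fin n) from WithLp.toLp 2 (fun i => max (o i) (y i))) - G y := by
  set s : EuclideanSpace ℝ (Fin n) := WithLp.toLp 2 (fun i => max (o i) (y i)) with hs
  set v : EuclideanSpace ℝ (Fin n) := s - y with hv
  have hdiff : Differentiable ℝ G := hG.differentiable one_ne_zero
  have hvi : ∀ i, v i = max (o i) (y i) - y i := fun i => rfl
  have hvnn : ∀ i, 0 ≤ v i := by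
    intro i; rw [hvi i]; exact sub_nonneg.2 (le_max_right _ _)
  -- points on the segment are ≥ y and in the cube
  have hge : ∀ t : ℝ, 0 ≤ t → ∀ i, y i ≤ (y + t • v) i := by
    intro t ht i
    have : (y + t • v) i = y i + t * v i := rfl
    rw [this]; nlinarith [hvnn i]
  have hcube : ∀ t : ℝ, 0 ≤ t → t ≤ 1 → ∀ i, 0 ≤ (y + t • v) i ∧ (y + t • v) i ≤ 1 := by
    intro t ht0 ht1 i
    refine ⟨le_trans (hy i).1 (hge t ht0 i), ?_⟩
    have h1 : (y + t • v) i = y i + t * v i := rfl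
    have h2 : max (o i) (y i) ≤ 1 := max_le (ho i).2 (hy i).2
    rw [h1]
    nlinarith [hvnn i, hvi i]
  -- fderiv applied to v equals inner of gradient with v
  have hfd : ∀ x : EuclideanSpace ℝ (Fin n), (fderiv ℝ G x) v = ⟪gradient G x, v⟫ := by
    intro x
    have h := (hdiff x).hasGradientAt
    have h2 := hasGradientAt_iff_hasFDerivAt.1 h
    rw [h2.fderiv]
    rfl
  -- derivative of the composed curve
  have hcurve : ∀ t : ℝ,
      HasDerivAt (fun t : ℝ => G (y + t • v)) (⟪gradient G (y + t • v), v⟫) t := by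
    intro t
    have hline : HasDerivAt (fun t : ℝ => y + t • v) v t := by
      simpa using ((hasDerivAt_id t).smul_const v).const_add y
    have := (hdiff (y + t • v)).hasFDerivAt.comp_hasDerivAt t hline
    rw [← hfd]; exact this
  -- pointwise gradient inequality along the segment
  have hkey : ∀ t : ℝ, 0 ≤ t → t ≤ 1 →
      ⟪gradient G (y + t • v), v⟫ ≤ ⟪gradient G y, v⟫ := by
    intro t ht0 ht1
    rw [PiLp.inner_apply, PiLp.inner_apply]
    refine Finset.sum_le_sum fun i _ => ?_
    simp only [RCLike.inner_apply, conj_trivial]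
    exact mul_le_mul_of_nonneg_left
      (hAnti y (y + t • v) hy (fun i => hcube t ht0 ht1 i) (hge t ht0) i) (hvnn i)
  -- φ t := c * t - G(y + t v) is monotone on [0,1]
  set c : ℝ := ⟪gradient G y, v⟫ with hc
  have hφmono : MonotoneOn (fun t : ℝ => c * t - G (y + t • v)) (Set.Icc 0 1) := by
    have hder : ∀ t : ℝ, HasDerivAt (fun t : ℝ => c * t - G (y + t • v))
        (c - ⟪gradient G (y + t • v), v⟫) t := by
      intro t
      have h := ((hasDerivAt_id t).const_mul c).sub (hcurve t); rw [mul_one] at h; exact h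
    apply monotoneOn_of_deriv_nonneg (convex_Icc 0 1)
    · exact Continuous.continuousOn (by
        have : Continuous fun t : ℝ => G (y + t • v) :=
          hG.continuous.comp (continuous_const.add (continuous_id.smul continuous_const))
        exact (continuous_const.mul continuous_id).sub this)
    · intro t ht
      exact ((hder t).differentiableAt).differentiableWithinAt
    · intro t ht
      rw [interior_Icc] at ht
      rw [(hder t).deriv]
      have := hkey t ht.1.le ht.2.le
      linarith
  have h01 := hφmono (Set.mem_Icc.2 ⟨le_rfl, zero_le_one⟩)
    (Set.mem_Icc.2 ⟨zero_le_one, le_rfl⟩) zero_le_one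
  simp only [zero_smul, add_zero, one_smul, mul_zero, mul_one] at h01
  have hy1 : y + v = s := by simp [hv]
  rw [hy1] at h01
  show ⟪v, gradient G y⟫ ≥ G s - G y
  rw [real_inner_comm]
  linarith
end

section
/- Let G : [0,1]^n → ℝ be continuously differentiable, DR-submodular (gradient antitone), monotone (gradient nonnegative), and C : [0,1]^n → ℝ concave and monotone. Set F = G + C. Then for all y, o ∈ [0,1]^n: ⟨o, ∇F(y)⟩ ≥ F(o) − F(y). -/
open scoped RealInnerProductSpace

section helpers
variable {n : ℕ}

lemma line_hasDerivAt (f : EuclideanSpace ℝ (Fin n) → ℝ) (hf : ContDiff ℝ 1 f)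
    (a v : EuclideanSpace ℝ (Fin n)) (t : ℝ) :
    HasDerivAt (fun s : ℝ => f (a + s • v)) ⟪gradient f (a + t • v), v⟫ t := by
  have h1 : HasDerivAt (fun s : ℝ => a + s • v) v t := by
    simpa using ((hasDerivAt_id t).smul_const v).const_add a
  have h2 := ((hf.differentiable one_ne_zero (a + t • v)).hasGradientAt).hasFDerivAt
  simpa [InnerProductSpace.toDual_apply_apply, Function.comp_def] using h2.comp_hasDerivAt t h1

lemma seg_le (f : EuclideanSpace ℝ (Fin n) → ℝ) (hf : ContDiff ℝ 1 f)
    (a v : EuclideanSpace ℝ (Fin n)) (B : ℝ)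
    (hB : ∀ t ∈ Set.Icc (0:ℝ) 1, ⟪gradient f (a + t • v), v⟫ ≤ B) :
    f (a + v) - f a ≤ B := by
  set φ : ℝ → ℝ := fun t => B * t - f (a + t • v) with hφ
  have hder : ∀ t : ℝ, HasDerivAt φ (B - ⟪gradient f (a + t • v), v⟫) t := fun t => by
    have h := ((hasDerivAt_id t).const_mul B).sub (line_hasDerivAt f hf a v t)
    rw [mul_one] at h; exact h
  have hmono : MonotoneOn φ (Set.Icc (0:ℝ) 1) := by
    apply monotoneOn_of_deriv_nonneg (convex_Icc 0 1)
      (fun t _ => (hder t).continuousAt.continuousWithinAt)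
      (fun t _ => (hder t).differentiableAt.differentiableWithinAt)
    intro t ht
    rw [interior_Icc] at ht
    rw [(hder t).deriv]
    have := hB t ⟨le_of_lt ht.1, le_of_lt ht.2⟩
    linarith
  have := hmono (Set.mem_Icc.2 ⟨le_refl 0, zero_le_one⟩)
    (Set.mem_Icc.2 ⟨zero_le_one, le_refl 1⟩) zero_le_one
  simp only [hφ, zero_smul, add_zero, one_smul, mul_zero, mul_one] at this
  linarith

lemma seg_ge (f : EuclideanSpace ℝ (Fin n) → ℝ) (hf : ContDiff ℝ 1 f)
    (a v : EuclideanSpace ℝ (Fin n))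
    (hB : ∀ t ∈ Set.Icc (0:ℝ) 1, 0 ≤ ⟪gradient f (a + t • v), v⟫) :
    f a ≤ f (a + v) := by
  set φ : ℝ → ℝ := fun t => f (a + t • v) with hφ
  have hder := line_hasDerivAt f hf a v
  have hmono : MonotoneOn φ (Set.Icc (0:ℝ) 1) := by
    apply monotoneOn_of_deriv_nonneg (convex_Icc 0 1)
      (fun t _ => (hder t).continuousAt.continuousWithinAt)
      (fun t _ => (hder t).differentiableAt.differentiableWithinAt)
    intro t ht
    rw [interior_Icc] at ht
    rw [(hder t).deriv]
    exact hB t ⟨le_of_lt ht.1, le_of_lt ht.2⟩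
  have := hmono (Set.mem_Icc.2 ⟨le_refl 0, zero_le_one⟩)
    (Set.mem_Icc.2 ⟨zero_le_one, le_refl 1⟩) zero_le_one
  simpa [hφ] using this

lemma concave_grad (C : EuclideanSpace ℝ (Fin n) → ℝ) (hC : ContDiff ℝ 1 C)
    {s : Set (EuclideanSpace ℝ (Fin n))} (hConc : ConcaveOn ℝ s C)
    {y o : EuclideanSpace ℝ (Fin n)} (hy : y ∈ s) (ho : o ∈ s) :
    C o - C y ≤ ⟪gradient C y, o - y⟫ := by
  set ψ : ℝ → ℝ := fun t => C (y + t • (o - y)) with hψ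
  have hd : HasDerivAt ψ ⟪gradient C y, o - y⟫ 0 := by
    simpa using line_hasDerivAt C hC y (o - y) 0
  have hslope : Filter.Tendsto (slope ψ 0) (nhdsWithin 0 (Set.Ioi 0))
      (nhds ⟪gradient C y, o - y⟫) := by
    have := hasDerivAt_iff_tendsto_slope.mp hd
    exact this.mono_left (nhdsWithin_mono 0 (fun t ht => Set.mem_compl_singleton_iff.2
      (ne_of_gt ht)))
  refine ge_of_tendsto hslope ?_
  filter_upwards [Ioc_mem_nhdsGT_of_mem (Set.mem_Ico.2 ⟨le_refl (0:ℝ), zero_lt_one⟩)]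
    with t ht
  have ht0 : (0:ℝ) < t := ht.1
  have ht1 : t ≤ 1 := ht.2
  have hcomb : (1 - t) • C y + t • C o ≤ C ((1 - t) • y + t • o) :=
    hConc.2 hy ho (by linarith) (le_of_lt ht0) (by ring)
  have heq : y + t • (o - y) = (1 - t) • y + t • o := by
    module
  have : C y + t * (C o - C y) ≤ ψ t := by
    rw [hψ]; simp only [heq]
    calc C y + t * (C o - C y) = (1 - t) • C y + t • C o := by simp [smul_eq_mul]; ring
    _ ≤ _ := hcomb
  rw [slope_def_field]
  have hψ0 : ψ 0 = C y := by simp [hψ]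
  rw [hψ0]
  rw [sub_zero, le_div_iff₀ ht0]
  linarith

end helpers

theorem inner_opt_gradient_ge_diff (n : ℕ) (G C : EuclideanSpace ℝ (Fin n) → ℝ)
    (hG : ContDiff ℝ 1 G) (hC : ContDiff ℝ 1 C)
    (hAnti : ∀ a b : EuclideanSpace ℝ (Fin n),
      (∀ i, 0 ≤ a i ∧ a i ≤ 1) → (∀ i, 0 ≤ b i ∧ b i ≤ 1) → (∀ i, a i ≤ b i) →
      ∀ i, gradient G b i ≤ gradient G a i)
    (hGmono : ∀ a : EuclideanSpace ℝ (Fin n), (∀ i, 0 ≤ a i ∧ a i ≤ 1) →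
      ∀ i, 0 ≤ gradient G a i)
    (hConc : ConcaveOn ℝ {x : EuclideanSpace ℝ (Fin n) | ∀ i, 0 ≤ x i ∧ x i ≤ 1} C)
    (hCmono : ∀ a : EuclideanSpace ℝ (Fin n), (∀ i, 0 ≤ a i ∧ a i ≤ 1) →
      ∀ i, 0 ≤ gradient C a i)
    (y o : EuclideanSpace ℝ (Fin n))
    (hy : ∀ i, 0 ≤ y i ∧ y i ≤ 1) (ho : ∀ i, 0 ≤ o i ∧ o i ≤ 1) :
    ⟪o, gradient (fun x => G x + C x) y⟫ ≥
      (G o + C o) - (G y + C y) := by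
  -- gradient of the sum
  have hGy := (hG.differentiable one_ne_zero y).hasGradientAt
  have hCy := (hC.differentiable one_ne_zero y).hasGradientAt
  have hadd : HasGradientAt (fun x => G x + C x) (gradient G y + gradient C y) y := by
    rw [hasGradientAt_iff_hasFDerivAt, map_add]
    exact hGy.hasFDerivAt.add hCy.hasFDerivAt
  rw [hadd.gradient, inner_add_right]
  -- the coordinatewise max
  set z : EuclideanSpace ℝ (Fin n) := WithLp.toLp 2 (fun i => max (y i) (o i)) with hz
  have hzy : ∀ i, y i ≤ z i := fun i => le_max_left _ _
  have hzo : ∀ i, o i ≤ z i := fun i => le_max_right _ _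
  have hzc : ∀ i, 0 ≤ z i ∧ z i ≤ 1 := fun i =>
    ⟨le_trans (hy i).1 (hzy i), max_le (hy i).2 (ho i).2⟩
  -- point on segment in cube
  have hseg : ∀ (a b : EuclideanSpace ℝ (Fin n)), (∀ i, 0 ≤ a i ∧ a i ≤ 1) →
      (∀ i, 0 ≤ b i ∧ b i ≤ 1) → (∀ i, a i ≤ b i) → ∀ t ∈ Set.Icc (0:ℝ) 1,
      (∀ i, a i ≤ (a + t • (b - a)) i ∧ (a + t • (b - a)) i ≤ b i) := by
    intro a b ha hb hab t ht i
    have h1 : (a + t • (b - a)) i = a i + t * (b i - a i) := rfl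
    have h2 : 0 ≤ b i - a i := by linarith [hab i]
    constructor
    · rw [h1]; nlinarith [ht.1]
    · rw [h1]; nlinarith [ht.2]
  -- Step 1 : G o ≤ G z
  have step1 : G o ≤ G z := by
    have : G o ≤ G (o + (z - o)) := by
      apply seg_ge G hG
      intro t ht
      have hp := hseg o z ho hzc hzo t ht
      have hpc : ∀ i, 0 ≤ (o + t • (z - o)) i ∧ (o + t • (z - o)) i ≤ 1 :=
        fun i => ⟨le_trans (ho i).1 (hp i).1, le_trans (hp i).2 (hzc i).2⟩
      rw [PiLp.inner_apply]
      apply Finset.sum_nonneg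
      intro i _
      simp only [RCLike.inner_apply, conj_trivial]
      have := hGmono _ hpc i
      have h2 : 0 ≤ (z - o) i := by have := hzo i; simpa using (by linarith : (0:ℝ) ≤ z i - o i)
      positivity
    simpa using this
  -- Step 2 : G z - G y ≤ ⟪∇G y, z - y⟫
  have step2 : G z - G y ≤ ⟪gradient G y, z - y⟫ := by
    have : G (y + (z - y)) - G y ≤ ⟪gradient G y, z - y⟫ := by
      apply seg_le G hG
      intro t ht
      have hp := hseg y z hy hzc hzy t ht
      have hpc : ∀ i, 0 ≤ (y + t • (z - y)) i ∧ (y + t • (z - y)) i ≤ 1 :=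
        fun i => ⟨le_trans (hy i).1 (hp i).1, le_trans (hp i).2 (hzc i).2⟩
      rw [PiLp.inner_apply, PiLp.inner_apply]
      apply Finset.sum_le_sum
      intro i _
      simp only [RCLike.inner_apply, conj_trivial]
      have hgle := hAnti y _ hy hpc (fun i => (hp i).1) i
      have h2 : 0 ≤ (z - y) i := by have := hzy i; simpa using (by linarith : (0:ℝ) ≤ z i - y i)
      exact mul_le_mul_of_nonneg_left hgle h2
    simpa using this
  -- Step 3 : ⟪∇G y, z - y⟫ ≤ ⟪o, ∇G y⟫
  have step3 : ⟪gradient G y, z - y⟫ ≤ ⟪o, gradient G y⟫ := by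
    rw [PiLp.inner_apply, PiLp.inner_apply]
    apply Finset.sum_le_sum
    intro i _
    simp only [RCLike.inner_apply, conj_trivial]
    have hg := hGmono y hy i
    have h1 : (z - y) i = z i - y i := rfl
    have h2 : z i - y i ≤ o i := by
      rcases le_total (y i) (o i) with h | h
      · have : z i = o i := max_eq_right h
        rw [this]; linarith [(hy i).1]
      · have : z i = y i := max_eq_left h
        rw [this]; linarith [(ho i).1]
    calc (z - y) i * gradient G y i ≤ o i * gradient G y i := by
          rw [h1]; exact mul_le_mul_of_nonneg_right h2 hg
    _ = gradient G y i * o i := mul_comm _ _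
  -- Step 4 : C o - C y ≤ ⟪∇C y, o - y⟫ ≤ ⟪o, ∇C y⟫
  have step4 : C o - C y ≤ ⟪gradient C y, o - y⟫ := concave_grad C hC hConc hy ho
  have step5 : ⟪gradient C y, o - y⟫ ≤ ⟪o, gradient C y⟫ := by
    rw [PiLp.inner_apply, PiLp.inner_apply]
    apply Finset.sum_le_sum
    intro i _
    simp only [RCLike.inner_apply, conj_trivial]
    have hg := hCmono y hy i
    have h1 : (o - y) i = o i - y i := rfl
    calc (o - y) i * gradient C y i ≤ o i * gradient C y i := by
          rw [h1]; nlinarith [(hy i).1]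
    _ = gradient C y i * o i := mul_comm _ _
  linarith
end

section
/- Let C : [0,1]^n → ℝ be concave and nonnegative, and let o, y ∈ [0,1]^n and M ∈ (0,1) satisfy 0 ≤ y ≤ (1−M)·1 coordinate-wise. Then C(o ⊙ (1 − y) + y) ≥ M·C(o), where ⊙ denotes coordinate-wise multiplication and 1 the all-ones vector. -/
theorem concave_measured_lower_bound (n : ℕ) (C : EuclideanSpace ℝ (Fin n) → ℝ)
    (hConc : ConcaveOn ℝ {x : EuclideanSpace ℝ (Fin n) | ∀ i, 0 ≤ x i ∧ x i ≤ 1} C)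
    (hNonneg : ∀ x : EuclideanSpace ℝ (Fin n), (∀ i, 0 ≤ x i ∧ x i ≤ 1) → 0 ≤ C x)
    (o y : EuclideanSpace ℝ (Fin n)) (ho : ∀ i, 0 ≤ o i ∧ o i ≤ 1)
    (M : ℝ) (hM : M ∈ Set.Ioo (0 : ℝ) 1)
    (hy : ∀ i, 0 ≤ y i ∧ y i ≤ 1 - M) :
    C (WithLp.toLp 2 (fun i => o i * (1 - y i) + y i) : EuclideanSpace ℝ (Fin n)) ≥ M * C o := by
  obtain ⟨hM0, hM1⟩ := hM
  have h1M : 0 < 1 - M := by linarith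
  set z : EuclideanSpace ℝ (Fin n) := WithLp.toLp 2 (fun i => ((1 - M - y i) * o i + y i) / (1 - M)) with hz
  have hzmem : ∀ i, 0 ≤ z i ∧ z i ≤ 1 := by
    intro i
    obtain ⟨hy0, hy1⟩ := hy i
    obtain ⟨ho0, ho1⟩ := ho i
    constructor
    · apply div_nonneg _ h1M.le
      nlinarith
    · show ((1 - M - y i) * o i + y i) / (1 - M) ≤ 1
      rw [div_le_one h1M]
      nlinarith
  have key := hConc.2 ho hzmem hM0.le h1M.le (by ring)
  have heq : M • o + (1 - M) • z = (WithLp.toLp 2 (fun i => o i * (1 - y i) + y i) : EuclideanSpace ℝ (Fin n)) := by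
    ext i
    show M * o i + (1 - M) * (((1 - M - y i) * o i + y i) / (1 - M)) = o i * (1 - y i) + y i
    field_simp
    ring
  rw [heq] at key
  have hCz : 0 ≤ C z := hNonneg z hzmem
  simp only [smul_eq_mul] at key
  nlinarith
end

section
/- Let G : [0,1]^n → ℝ be continuously differentiable, nonnegative, and DR-submodular (gradient antitone). Let o, y ∈ [0,1]^n and M ∈ (0,1) satisfy 0 ≤ y ≤ (1−M)·1. Then G(o + (1 − o) ⊙ y) ≥ M·G(o). -/
theorem dr_submodular_measured_lower_bound (n : ℕ) (G : EuclideanSpace ℝ (Fin n) → ℝ)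
    (hG : ContDiff ℝ 1 G)
    (hAnti : ∀ a b : EuclideanSpace ℝ (Fin n),
      (∀ i, 0 ≤ a i ∧ a i ≤ 1) → (∀ i, 0 ≤ b i ∧ b i ≤ 1) → (∀ i, a i ≤ b i) →
      ∀ i, gradient G b i ≤ gradient G a i)
    (hNonneg : ∀ x : EuclideanSpace ℝ (Fin n), (∀ i, 0 ≤ x i ∧ x i ≤ 1) → 0 ≤ G x)
    (o y : EuclideanSpace ℝ (Fin n)) (ho : ∀ i, 0 ≤ o i ∧ o i ≤ 1)
    (M : ℝ) (hM : M ∈ Set.Ioo (0 : ℝ) 1)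
    (hy : ∀ i, 0 ≤ y i ∧ y i ≤ 1 - M) :
    G (WithLp.toLp 2 (fun i => o i + (1 - o i) * y i) : EuclideanSpace ℝ (Fin n)) ≥ M * G o := by
  obtain ⟨hM0, hM1⟩ := hM
  have h1M : (0:ℝ) < 1 - M := by linarith
  set c : EuclideanSpace ℝ (Fin n) := WithLp.toLp 2 (fun i => (1 - o i) * y i) with hc
  have hc0 : ∀ i, 0 ≤ c i := fun i => mul_nonneg (by linarith [(ho i).2]) (hy i).1
  set T : ℝ := (1 - M)⁻¹ with hT
  have hT0 : 0 < T := inv_pos.mpr h1M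
  have hT1 : 1 ≤ T := by
    rw [hT, le_inv_comm₀ one_pos h1M]; simpa using hM0.le
  set p : ℝ → EuclideanSpace ℝ (Fin n) := fun z => o + z • c with hp
  have hpapply : ∀ z i, p z i = o i + z * ((1 - o i) * y i) := by
    intro z i; simp [hp, hc]
  -- points stay in the box for z ∈ [0, T]
  have hbox : ∀ z ∈ Set.Icc (0:ℝ) T, ∀ i, 0 ≤ p z i ∧ p z i ≤ 1 := by
    intro z hz i
    have h1 : 0 ≤ 1 - o i := by linarith [(ho i).2]
    have h2 : z * ((1 - o i) * y i) ≤ T * ((1 - o i) * (1 - M)) := by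
      apply mul_le_mul hz.2 (mul_le_mul_of_nonneg_left (hy i).2 h1)
        (mul_nonneg h1 (hy i).1) hT0.le
    have h3 : T * ((1 - o i) * (1 - M)) = 1 - o i := by
      rw [hT]; field_simp
    constructor
    · rw [hpapply]
      have := mul_nonneg hz.1 (mul_nonneg h1 (hy i).1)
      linarith [(ho i).1]
    · rw [hpapply]; rw [h3] at h2; linarith
  set f : ℝ → ℝ := fun z => G (p z) with hf
  set f' : ℝ → ℝ := fun z => fderiv ℝ G (p z) c with hf'
  have hGdiff : Differentiable ℝ G := hG.differentiable one_ne_zero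
  have hderiv : ∀ z : ℝ, HasDerivAt f (f' z) z := by
    intro z
    have h1 : HasDerivAt (fun z : ℝ => z • c) ((1:ℝ) • c) z :=
      (hasDerivAt_id z).smul_const c
    have h2 : HasDerivAt p c z := by
      simpa [hp] using (h1.const_add o)
    exact (hGdiff (p z)).hasFDerivAt.comp_hasDerivAt z h2
  -- fderiv in terms of gradient
  have hgradf : ∀ x : EuclideanSpace ℝ (Fin n), fderiv ℝ G x c = ∑ i, gradient G x i * c i := by
    intro x
    have : fderiv ℝ G x c = (InnerProductSpace.toDual ℝ _) (gradient G x) c := by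
      rw [gradient, LinearIsometryEquiv.apply_symm_apply]
    rw [this, InnerProductSpace.toDual_apply_apply]
    simp only [PiLp.inner_apply, RCLike.inner_apply, conj_trivial]
    exact Finset.sum_congr rfl fun i _ => mul_comm _ _
  -- f' is antitone on [0, T]
  have hanti : AntitoneOn f' (Set.Icc (0:ℝ) T) := by
    intro z₁ hz₁ z₂ hz₂ hle
    simp only [hf', hgradf]
    apply Finset.sum_le_sum
    intro i _
    refine mul_le_mul_of_nonneg_right ?_ (hc0 i)
    refine hAnti (p z₁) (p z₂) (hbox z₁ hz₁) (hbox z₂ hz₂) ?_ i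
    intro j
    rw [hpapply, hpapply]
    have h4 : (0:ℝ) ≤ (1 - o j) * y j :=
      mul_nonneg (by linarith [(ho j).2]) (hy j).1
    nlinarith
  have hfd : Differentiable ℝ f := fun z => (hderiv z).differentiableAt
  have hderiv_eq : ∀ z, deriv f z = f' z := fun z => (hderiv z).deriv
  have hconcave : ConcaveOn ℝ (Set.Icc (0:ℝ) T) f := by
    apply AntitoneOn.concaveOn_of_deriv (convex_Icc 0 T) hfd.continuous.continuousOn
      hfd.differentiableOn
    intro a ha b hb hab
    rw [hderiv_eq, hderiv_eq]
    exact hanti (interior_subset ha) (interior_subset hb) hab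
  have h0mem : (0:ℝ) ∈ Set.Icc (0:ℝ) T := ⟨le_refl _, hT0.le⟩
  have hTmem : T ∈ Set.Icc (0:ℝ) T := ⟨hT0.le, le_refl _⟩
  have key := hconcave.2 h0mem hTmem hM0.le (by linarith : (0:ℝ) ≤ 1 - M) (by ring)
  have hMT : M • (0:ℝ) + (1 - M) • T = 1 := by
    simp [hT, smul_eq_mul]
    field_simp
  rw [hMT] at key
  have hp0 : p 0 = o := by ext i; simp [hpapply]
  have hp1 : p 1 = (WithLp.toLp 2 (fun i => o i + (1 - o i) * y i) : EuclideanSpace ℝ (Fin n)) := by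
    ext i; simp [hpapply]
  have hf0 : f 0 = G o := by show G (p 0) = G o; rw [hp0]
  have hf1 : f 1 = G (WithLp.toLp 2 (fun i => o i + (1 - o i) * y i) : EuclideanSpace ℝ (Fin n)) := by
    show G (p 1) = _; rw [hp1]
  have hfT : 0 ≤ f T := hNonneg (p T) (hbox T hTmem)
  rw [hf0, hf1] at key
  have h1Mpos : 0 ≤ (1 - M) * f T := mul_nonneg h1M.le hfT
  simp only [smul_eq_mul] at key
  linarith
end

section
/- Let G : [0,1]^n → ℝ be continuously differentiable, DR-submodular (gradient antitone), monotone, and nonnegative. Then for all o, y ∈ [0,1]^n: ⟨o − y, ∇G(y)⟩ ≥ G(o) − 2·G(y). -/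
open scoped RealInnerProductSpace

theorem path_deriv (n : ℕ) (G : EuclideanSpace ℝ (Fin n) → ℝ) (hG : ContDiff ℝ 1 G)
    (a b : EuclideanSpace ℝ (Fin n)) (t : ℝ) :
    HasDerivAt (fun t : ℝ => G (a + t • (b - a))) ⟪gradient G (a + t • (b - a)), b - a⟫ t := by
  have hpath : HasDerivAt (fun t : ℝ => a + t • (b - a)) (b - a) t := by
    simpa using ((hasDerivAt_id t).smul_const (b - a)).const_add a
  have hgrad : HasGradientAt G (gradient G (a + t • (b - a))) (a + t • (b - a)) :=
    ((hG.differentiable one_ne_zero) _).hasGradientAt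
  exact (hgrad.hasFDerivAt.comp_hasDerivAt t hpath).congr_deriv (by simp)

theorem seg_le_s11 (n : ℕ) (G : EuclideanSpace ℝ (Fin n) → ℝ) (hG : ContDiff ℝ 1 G)
    (a b : EuclideanSpace ℝ (Fin n)) (C : ℝ)
    (hb : ∀ t ∈ Set.Icc (0:ℝ) 1, ⟪gradient G (a + t • (b - a)), b - a⟫ ≤ C) :
    G b - G a ≤ C := by
  set φ : ℝ → ℝ := fun t => C * t - G (a + t • (b - a)) with hφ
  have hd : ∀ t : ℝ, HasDerivAt φ (C - ⟪gradient G (a + t • (b - a)), b - a⟫) t := by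
    intro t
    have := ((hasDerivAt_id t).const_mul C).sub (path_deriv n G hG a b t)
    exact this.congr_deriv (by ring)
  have mono : MonotoneOn φ (Set.Icc 0 1) := by
    apply monotoneOn_of_deriv_nonneg (convex_Icc 0 1)
    · exact Continuous.continuousOn (by
        have : Differentiable ℝ φ := fun t => (hd t).differentiableAt
        exact this.continuous)
    · exact fun t _ => (hd t).differentiableAt.differentiableWithinAt
    · intro t ht
      rw [interior_Icc] at ht
      rw [(hd t).deriv]
      have := hb t ⟨le_of_lt ht.1, le_of_lt ht.2⟩
      linarith
  have h01 := mono (Set.left_mem_Icc.2 zero_le_one) (Set.right_mem_Icc.2 zero_le_one) zero_le_one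
  have e0 : φ 0 = -G a := by simp [hφ]
  have e1 : φ 1 = C - G b := by simp [hφ]
  rw [e0, e1] at h01
  linarith

theorem inner_o_sub_y_gradient_ge (n : ℕ) (G : EuclideanSpace ℝ (Fin n) → ℝ)
    (hG : ContDiff ℝ 1 G)
    (hAnti : ∀ a b : EuclideanSpace ℝ (Fin n),
      (∀ i, 0 ≤ a i ∧ a i ≤ 1) → (∀ i, 0 ≤ b i ∧ b i ≤ 1) → (∀ i, a i ≤ b i) →
      ∀ i, gradient G b i ≤ gradient G a i)
    (hMono : ∀ a : EuclideanSpace ℝ (Fin n), (∀ i, 0 ≤ a i ∧ a i ≤ 1) →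
      ∀ i, 0 ≤ gradient G a i)
    (hNonneg : ∀ x : EuclideanSpace ℝ (Fin n), (∀ i, 0 ≤ x i ∧ x i ≤ 1) → 0 ≤ G x)
    (o y : EuclideanSpace ℝ (Fin n))
    (ho : ∀ i, 0 ≤ o i ∧ o i ≤ 1) (hy : ∀ i, 0 ≤ y i ∧ y i ≤ 1) :
    ⟪o - y, gradient G y⟫ ≥ G o - 2 * G y := by
  set p : EuclideanSpace ℝ (Fin n) := WithLp.toLp 2 (fun i => max (o i) (y i)) with hp
  set q : EuclideanSpace ℝ (Fin n) := WithLp.toLp 2 (fun i => min (o i) (y i)) with hq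
  have hpc : ∀ i, 0 ≤ p i ∧ p i ≤ 1 := fun i =>
    ⟨le_max_of_le_left (ho i).1, max_le (ho i).2 (hy i).2⟩
  have hqc : ∀ i, 0 ≤ q i ∧ q i ≤ 1 := fun i =>
    ⟨le_min (ho i).1 (hy i).1, min_le_of_left_le (ho i).2⟩
  have happly : ∀ (a b : EuclideanSpace ℝ (Fin n)) (t : ℝ) (i : Fin n),
      (a + t • (b - a)) i = a i + t * (b i - a i) := by
    intro a b t i
    simp [PiLp.add_apply, PiLp.smul_apply, PiLp.sub_apply, smul_eq_mul]
  have hseg : ∀ (a b : EuclideanSpace ℝ (Fin n)), (∀ i, 0 ≤ a i ∧ a i ≤ 1) →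
      (∀ i, 0 ≤ b i ∧ b i ≤ 1) → ∀ t ∈ Set.Icc (0:ℝ) 1,
      ∀ i, 0 ≤ (a + t • (b - a)) i ∧ (a + t • (b - a)) i ≤ 1 := by
    intro a b ha hb t ht i
    have hai := ha i; have hbi := hb i
    rw [happly]
    constructor <;> nlinarith [ht.1, ht.2, hai.1, hai.2, hbi.1, hbi.2]
  -- key1 : G p - G y ≤ ⟪gradient G y, p - y⟫
  have key1 : G p - G y ≤ ⟪gradient G y, p - y⟫ := by
    apply seg_le_s11 n G hG y p _
    intro t ht
    have hz := hseg y p hy hpc t ht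
    have hgle : ∀ i, gradient G (y + t • (p - y)) i ≤ gradient G y i := by
      apply hAnti y _ hy hz
      intro i
      rw [happly]
      have : y i ≤ p i := le_max_right _ _
      nlinarith [ht.1]
    simp only [PiLp.inner_apply, RCLike.inner_apply, conj_trivial, PiLp.sub_apply]
    apply Finset.sum_le_sum
    intro i _
    have h1 : y i ≤ p i := le_max_right _ _
    nlinarith [hgle i]
  -- key2 : G q - G y ≤ ⟪gradient G y, q - y⟫
  have key2 : G q - G y ≤ ⟪gradient G y, q - y⟫ := by
    apply seg_le_s11 n G hG y q _
    intro t ht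
    have hz := hseg y q hy hqc t ht
    have hgle : ∀ i, gradient G y i ≤ gradient G (y + t • (q - y)) i := by
      apply hAnti _ y hz hy
      intro i
      rw [happly]
      have : q i ≤ y i := min_le_right _ _
      nlinarith [ht.1]
    simp only [PiLp.inner_apply, RCLike.inner_apply, conj_trivial, PiLp.sub_apply]
    apply Finset.sum_le_sum
    intro i _
    have h1 : q i ≤ y i := min_le_right _ _
    nlinarith [hgle i]
  -- key3 : G o - G p ≤ 0
  have key3 : G o - G p ≤ 0 := by
    apply seg_le_s11 n G hG p o 0
    intro t ht
    have hz := hseg p o hpc ho t ht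
    simp only [PiLp.inner_apply, RCLike.inner_apply, conj_trivial, PiLp.sub_apply]
    apply Finset.sum_nonpos
    intro i _
    have h1 : o i ≤ p i := le_max_left _ _
    have h2 := hMono _ hz i
    nlinarith
  have key4 : 0 ≤ G q := hNonneg q hqc
  -- combine
  have hsum : ⟪o - y, gradient G y⟫ = ⟪gradient G y, p - y⟫ + ⟪gradient G y, q - y⟫ := by
    simp only [PiLp.inner_apply, RCLike.inner_apply, conj_trivial, PiLp.sub_apply]
    rw [← Finset.sum_add_distrib]
    apply Finset.sum_congr rfl
    intro i _
    have h : p i + q i = o i + y i := max_add_min _ _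
    linear_combination (-(gradient G y i)) * h
  rw [ge_iff_le, hsum]
  linarith
end

section
/- Let (H(i))_{i=0..N} be reals with H(0) ≤ A for some A ≥ 0, and suppose that for a threshold sequence (g_i) and constants ε ∈ (0,1), B ≥ 0, either there exists 0 ≤ i ≤ N with H(i) ≤ g_i + ε·(A + B), or for all 1 ≤ i ≤ N, H(i−1) − H(i) ≥ ε²·(H(i−1) − g_{i−1}) − ε·B/N with N = ε^{−3}. Show that under the assumption H(i) > g_i + ε·(A + B) for all i (with g_i ≥ 0), summing the recurrence yields H(N) ≤ ε·B, a contradiction; hence some index i* ≤ N satisfies H(i*) ≤ g_{i*} + ε·(A + B). -/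
theorem low_H_exists (N : ℕ) (hN : 0 < N) (ε A B : ℝ)
    (hε : ε ∈ Set.Ioo (0 : ℝ) 1) (hNε : (N : ℝ) * ε ^ 3 = 1)
    (hA : 0 ≤ A) (hB : 0 ≤ B)
    (g H : ℕ → ℝ) (hg : ∀ i, 0 ≤ g i) (h0 : H 0 ≤ A)
    (hrec : ∀ i : ℕ, 1 ≤ i → i ≤ N →
      H (i - 1) - H i ≥ ε ^ 2 * (H (i - 1) - g (i - 1)) - ε * B / N) :
    ∃ i ≤ N, H i ≤ g i + ε * (A + B) := by
  by_contra hc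
  push_neg at hc
  obtain ⟨hε0, hε1⟩ := hε
  have hNne : (0:ℝ) < N := by exact_mod_cast hN
  have hinv : ε * B / N = ε ^ 4 * B := by
    field_simp
    linear_combination (-B) * hNε
  have key : ∀ k ≤ N, H k ≤ H 0 - k * (ε ^ 3 * (A + B * (1 - ε))) := by
    intro k hk
    induction k with
    | zero => simp
    | succ n ih =>
      have hn : n ≤ N := Nat.le_of_succ_le hk
      have ihn := ih hn
      have hr := hrec (n + 1) (by omega) hk
      simp only [Nat.add_sub_cancel] at hr
      have hgap := hc n hn
      rw [hinv] at hr
      push_cast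
      nlinarith [hg n, mul_pos hε0 hε0]
  have hN' := key N le_rfl
  have hHN := hc N le_rfl
  nlinarith [hg N, hNε, mul_nonneg hB (le_of_lt hε0),
    mul_nonneg (le_of_lt hε0) (add_nonneg hA hB)]
end
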